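/- Let q be a prime and a, b, c, d ∈ F_q with a² + b² + c² + d² = 0. Let C be a self-dual [2n, n] code over F_q with generator matrix rows g_1, ..., g_n, and λ_1, ..., λ_n ∈ F_q. Extend each row g_i by four coordinates: (λ_i a, λ_i b, λ_i c, λ_i d) for odd i and (-λ_i b, λ_i a, -λ_i d, λ_i c) for even i. Then any two extended rows are orthogonal, and each extended row is orthogonal to itself; hence these rows generate a self-orthogonal code of length 2n+4. -/
import Mathlib


open Matrix

/-- The Euclidean dual of a linear code `C ⊆ F^ι`. -/
def dualCode {ι : Type*} [Fintype ι] (F : Type*) [Field F] (C : Submodule F (ι → F)) :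
    Submodule F (ι → F) where
  carrier := {y | ∀ x ∈ C, ∑ i, x i * y i = 0}
  zero_mem' := by intro x hx; simp
  add_mem' := by
    intro a b ha hb x hx
    simp [mul_add, Finset.sum_add_distrib, ha x hx, hb x hx]
  smul_mem' := by
    intro c a ha x hx
    simp only [Pi.smul_apply, smul_eq_mul, Set.mem_setOf_eq]
    calc ∑ i, x i * (c * a i) = c * ∑ i, x i * a i := by
          rw [Finset.mul_sum]; exact Finset.sum_congr rfl fun i _ => by ring
      _ = 0 := by rw [ha x hx, mul_zero]

/-- The linear code generated by a matrix `G` (its row space). -/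
def rowSpan {κ ι F : Type*} [Field F] (G : Matrix κ ι F) : Submodule F (ι → F) :=
  Submodule.span F (Set.range G)


/-- extending each row `gᵢ` of a generator matrix of a self-dual code by
`(λᵢa, λᵢb, λᵢc, λᵢd)` for odd rows and `(-λᵢb, λᵢa, -λᵢd, λᵢc)` for even rows, where
`a² + b² + c² + d² = 0`, yields pairwise orthogonal rows generating a self-orthogonal
code of length `2n+4`. -/
theorem stmt_9 {q n : ℕ} [Fact (Nat.Prime q)]
    (a b c d : ZMod q) (habcd : a ^ 2 + b ^ 2 + c ^ 2 + d ^ 2 = 0)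
    (G : Matrix (Fin n) (Fin (2 * n)) (ZMod q))
    (hsd : rowSpan G = dualCode (ZMod q) (rowSpan G))
    (lam : Fin n → ZMod q)
    (G' : Matrix (Fin n) (Fin (2 * n) ⊕ Fin 4) (ZMod q))
    (hG' : ∀ i, G' i = Sum.elim (G i)
      (if Even i.val then ![lam i * a, lam i * b, lam i * c, lam i * d]
       else ![-(lam i * b), lam i * a, -(lam i * d), lam i * c])) :
    (∀ i j, ∑ k, G' i k * G' j k = 0) ∧
      rowSpan G' ≤ dualCode (ZMod q) (rowSpan G') := by
  have horth : ∀ i j, ∑ k, G' i k * G' j k = 0 := by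
    intro i j
    have h0 : ∑ k, G i k * G j k = 0 := by
      have hmem : G j ∈ rowSpan G := Submodule.subset_span ⟨j, rfl⟩
      rw [hsd] at hmem
      exact hmem (G i) (Submodule.subset_span ⟨i, rfl⟩)
    rw [hG' i, hG' j, Fintype.sum_sum_type]
    simp only [Sum.elim_inl, Sum.elim_inr]
    rw [h0, zero_add]
    split <;> split <;> rw [Fin.sum_univ_four] <;> simp <;>
      first | linear_combination lam i * lam j * habcd | ring
  refine ⟨horth, ?_⟩
  intro x hx z hz
  induction hx using Submodule.span_induction with
  | mem x hxm =>
    obtain ⟨j, rfl⟩ := hxm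
    induction hz using Submodule.span_induction with
    | mem z hzm => obtain ⟨i, rfl⟩ := hzm; exact horth i j
    | zero => simp
    | add u v _ _ hu hv => simp [add_mul, Finset.sum_add_distrib, hu, hv]
    | smul c u _ hu =>
      simp only [Pi.smul_apply, smul_eq_mul, mul_assoc, ← Finset.mul_sum, hu, mul_zero]
  | zero => simp
  | add u v _ _ hu hv => simp [mul_add, Finset.sum_add_distrib, hu, hv]
  | smul c u _ hu =>
    have : ∑ i, z i * (c • u) i = c * ∑ i, z i * u i := by
      rw [Finset.mul_sum]; exact Finset.sum_congr rfl fun i _ => by simp; ring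
    rw [this, hu, mul_zero]
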